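/- Let G = K_{a_1,…,a_k} be the complete multipartite graph with k ≥ 2 parts of sizes a_1,…,a_k, let n = a_1 + ⋯ + a_k, and let s be the number of parts of size 1. Then dim(G) = n − k if s = 0, and dim(G) = n + s − k − 1 if s ≥ 1. -/

import Mathlib

open SimpleGraph

/-- `W` is a resolving set of `G`: every pair of distinct vertices is
distinguished by its distance to some vertex of `W`. -/
def IsResolving {V : Type*} (G : SimpleGraph V) (W : Set V) : Prop :=
  ∀ x y : V, x ≠ y → ∃ z ∈ W, G.dist x z ≠ G.dist y z

/-- The metric dimension of `G`: the minimum cardinality of a resolving set. -/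
noncomputable def metricDim {V : Type*} (G : SimpleGraph V) : ℕ :=
  sInf {n | ∃ W : Set V, W.ncard = n ∧ IsResolving G W}

/-- Metric dimension of the complete multipartite graph `K_{a_1,…,a_k}` with
`k ≥ 2` nonempty parts: it equals `n - k` if no part is a singleton, and
`n + s - k - 1` if `s ≥ 1` parts are singletons, where `n = a_1 + ⋯ + a_k`. -/
lemma cmp_dist (k : ℕ) (hk : 2 ≤ k) (a : Fin k → ℕ) (ha : ∀ i, 1 ≤ a i)
    (x z : Σ i : Fin k, Fin (a i)) :
    (completeMultipartiteGraph (fun i : Fin k => Fin (a i))).dist x z =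
      if x = z then 0 else if x.1 = z.1 then 2 else 1 := by
  set G := completeMultipartiteGraph (fun i : Fin k => Fin (a i)) with hG
  have hadj : ∀ u v : Σ i : Fin k, Fin (a i), G.Adj u v ↔ u.1 ≠ v.1 := by
    intro u v; rfl
  split_ifs with h1 h2
  · subst h1; exact G.dist_self
  · obtain ⟨j, hj⟩ : ∃ j : Fin k, j ≠ x.1 := by
      have : 1 < Fintype.card (Fin k) := by rw [Fintype.card_fin]; omega
      exact Fintype.exists_ne_of_one_lt_card this x.1
    set w : Σ i : Fin k, Fin (a i) := ⟨j, ⟨0, ha j⟩⟩ with hw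
    have haxw : G.Adj x w := (hadj x w).mpr (by simpa using hj.symm)
    have hawz : G.Adj w z := (hadj w z).mpr (by rw [← h2]; simpa using hj)
    have hle : G.dist x z ≤ 2 := by
      have := G.dist_le (SimpleGraph.Walk.cons haxw (SimpleGraph.Walk.cons hawz SimpleGraph.Walk.nil))
      simpa using this
    have hne0 : G.dist x z ≠ 0 := by
      simp only [ne_eq, SimpleGraph.dist_eq_zero_iff_eq_or_not_reachable]
      push_neg
      exact ⟨h1, ⟨(SimpleGraph.Walk.cons haxw (SimpleGraph.Walk.cons hawz SimpleGraph.Walk.nil))⟩⟩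
    have hne1 : G.dist x z ≠ 1 := by
      simp only [ne_eq, SimpleGraph.dist_eq_one_iff_adj, hadj]
      simpa using h2
    omega
  · exact SimpleGraph.dist_eq_one_iff_adj.mpr ((hadj x z).mpr h2)

lemma sigma_eq_of_fst_eq_val_eq {k : ℕ} {a : Fin k → ℕ} {x y : Σ i : Fin k, Fin (a i)}
    (h : x.1 = y.1) (h2 : (x.2 : ℕ) = (y.2 : ℕ)) : x = y := by
  obtain ⟨i, xi⟩ := x; obtain ⟨j, yj⟩ := y
  dsimp at h h2; subst h
  simp only [Sigma.mk.inj_iff, heq_eq_eq]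
  exact ⟨trivial, Fin.ext h2⟩

lemma cmp_part_eq {k : ℕ} {a : Fin k → ℕ} {x y : Σ i : Fin k, Fin (a i)}
    (h : x.1 = y.1) (h1 : a x.1 = 1) : x = y := by
  refine sigma_eq_of_fst_eq_val_eq h ?_
  have hx2 := x.2.2
  have hy2 := y.2.2
  have hy1 : a y.1 = 1 := by rw [← h]; exact h1
  omega

theorem metricDim_completeMultipartite (k : ℕ) (hk : 2 ≤ k)
    (a : Fin k → ℕ) (ha : ∀ i, 1 ≤ a i) :
    metricDim (completeMultipartiteGraph (fun i : Fin k => Fin (a i))) =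
      if (Finset.univ.filter (fun i => a i = 1)).card = 0 then
        (∑ i, a i) - k
      else
        (∑ i, a i) + (Finset.univ.filter (fun i => a i = 1)).card - k - 1 := by
  classical
  set G := completeMultipartiteGraph (fun i : Fin k => Fin (a i)) with hG
  have hdist : ∀ x z, G.dist x z = if x = z then 0 else if x.1 = z.1 then 2 else 1 :=
    cmp_dist k hk a ha
  set s := (Finset.univ.filter (fun i => a i = 1)).card with hs
  set n := (∑ i, a i) with hn
  have hcard : Fintype.card (Σ i : Fin k, Fin (a i)) = n := by simp [hn]
  have hkn : k ≤ n := by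
    rw [hn]
    calc k = ∑ _i : Fin k, 1 := by simp
      _ ≤ ∑ i, a i := Finset.sum_le_sum fun i _ => ha i
  have hsk : s ≤ k := by
    rw [hs]
    simpa using Finset.card_filter_le Finset.univ (fun i => a i = 1)
  obtain ⟨i₀, hi₀⟩ : ∃ i₀ : Fin k, s ≠ 0 → a i₀ = 1 := by
    by_cases h : s = 0
    · exact ⟨⟨0, by omega⟩, fun h' => absurd h h'⟩
    · obtain ⟨i, hi⟩ := Finset.card_pos.mp (Nat.pos_of_ne_zero (hs ▸ h))
      exact ⟨i, fun _ => (Finset.mem_filter.mp hi).2⟩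
  -- the set of omitted vertices
  set M : Finset (Σ i : Fin k, Fin (a i)) :=
    (Finset.univ.filter (fun i => a i ≠ 1 ∨ i = i₀)).image (fun i => ⟨i, ⟨0, ha i⟩⟩) with hM
  have hMmem : ∀ v : Σ i : Fin k, Fin (a i),
      v ∈ M ↔ ((a v.1 ≠ 1 ∨ v.1 = i₀) ∧ (v.2 : ℕ) = 0) := by
    intro v
    constructor
    · intro hv
      obtain ⟨i, hi, hvi⟩ := Finset.mem_image.mp hv
      subst hvi
      exact ⟨(Finset.mem_filter.mp hi).2, rfl⟩
    · rintro ⟨hp, h0⟩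
      refine Finset.mem_image.mpr ⟨v.1, Finset.mem_filter.mpr ⟨Finset.mem_univ _, hp⟩, ?_⟩
      exact sigma_eq_of_fst_eq_val_eq rfl h0.symm
  -- W := complement of M is resolving
  have hres : IsResolving G (↑(Mᶜ) : Set (Σ i : Fin k, Fin (a i))) := by
    intro x y hxy
    by_cases hx : x ∈ Mᶜ
    · refine ⟨x, hx, ?_⟩
      rw [hdist x x, hdist y x, if_pos rfl, if_neg (fun h => hxy h.symm)]
      split_ifs <;> omega
    · by_cases hy : y ∈ Mᶜ
      · refine ⟨y, hy, ?_⟩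
        rw [hdist x y, hdist y y, if_pos rfl, if_neg hxy]
        split_ifs <;> omega
      · have hxM : x ∈ M := by simpa using hx
        have hyM : y ∈ M := by simpa using hy
        obtain ⟨hpx, hx0⟩ := (hMmem x).mp hxM
        obtain ⟨hpy, hy0⟩ := (hMmem y).mp hyM
        have hij : x.1 ≠ y.1 := by
          intro h
          exact hxy (sigma_eq_of_fst_eq_val_eq h (by omega))
        rcases eq_or_ne (a x.1) 1 with h1 | h1
        · rcases eq_or_ne (a y.1) 1 with h1' | h1'
          · have e1 : x.1 = i₀ := hpx.resolve_left (by simpa using h1)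
            have e2 : y.1 = i₀ := hpy.resolve_left (by simpa using h1')
            exact absurd (e1.trans e2.symm) hij
          · -- z in part y.1
            refine ⟨⟨y.1, ⟨1, by omega⟩⟩, ?_, ?_⟩
            · rw [Finset.mem_coe, Finset.mem_compl, hMmem]
              simp
            · have hxz : x ≠ ⟨y.1, ⟨1, by omega⟩⟩ := by
                intro h; apply hij; rw [h]
              have hyz : y ≠ ⟨y.1, ⟨1, by omega⟩⟩ := by
                intro h
                have := congrArg (fun v : Σ i : Fin k, Fin (a i) => (v.2 : ℕ)) h
                simp at this; omega
              rw [hdist, hdist, if_neg hxz, if_neg hyz, if_neg hij, if_pos rfl]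
              omega
        · -- z in part x.1
          refine ⟨⟨x.1, ⟨1, by omega⟩⟩, ?_, ?_⟩
          · rw [Finset.mem_coe, Finset.mem_compl, hMmem]
            simp
          · have hyz : y ≠ ⟨x.1, ⟨1, by omega⟩⟩ := by
              intro h; exact hij (congrArg Sigma.fst h).symm
            have hxz : x ≠ ⟨x.1, ⟨1, by omega⟩⟩ := by
              intro h
              have := congrArg (fun v : Σ i : Fin k, Fin (a i) => (v.2 : ℕ)) h
              simp at this; omega
            rw [hdist, hdist, if_neg hxz, if_neg hyz, if_pos rfl, if_neg (fun h => hij h.symm)]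
            omega
  -- cardinality of M
  have hMcard : M.card = (Finset.univ.filter (fun i => a i ≠ 1 ∨ i = i₀)).card := by
    rw [hM]
    apply Finset.card_image_of_injective
    intro i j h
    exact congrArg Sigma.fst h
  have hfilterneg : (Finset.univ.filter (fun i => a i ≠ 1)).card = k - s := by
    have h := Finset.card_filter_add_card_filter_not
      (s := (Finset.univ : Finset (Fin k))) (p := fun i => a i = 1)
    rw [Finset.card_univ, Fintype.card_fin] at h
    simp only [ne_eq]
    omega
  have hMcard' : M.card = if s = 0 then k else k - s + 1 := by
    rw [hMcard]
    split_ifs with h0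
    · have hTempty : (Finset.univ.filter (fun i => a i = 1)) = ∅ :=
        Finset.card_eq_zero.mp (by rw [← hs]; exact h0)
      have hall : ∀ i : Fin k, a i ≠ 1 := by
        intro i hi
        have hmem' : i ∈ Finset.univ.filter (fun i => a i = 1) :=
          Finset.mem_filter.mpr ⟨Finset.mem_univ _, hi⟩
        rw [hTempty] at hmem'
        exact absurd hmem' (Finset.notMem_empty i)
      rw [Finset.filter_true_of_mem (fun i _ => Or.inl (hall i))]
      simp
    · have hi01 : a i₀ = 1 := hi₀ h0
      have h1' : (Finset.univ.filter (fun i => i = i₀)).card = 1 := by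
        rw [Finset.filter_eq']
        simp
      rw [Finset.filter_or]
      rw [Finset.card_union_of_disjoint]
      · rw [hfilterneg, h1']
      · rw [Finset.disjoint_left]
        intro i hi hi'
        have h1 : a i ≠ 1 := (Finset.mem_filter.mp hi).2
        have h2 : i = i₀ := (Finset.mem_filter.mp hi').2
        exact h1 (h2 ▸ hi01)
  have hmem : (n - M.card) ∈ {m | ∃ W : Set (Σ i : Fin k, Fin (a i)),
      W.ncard = m ∧ IsResolving G W} := by
    refine ⟨↑(Mᶜ), ?_, hres⟩
    rw [Set.ncard_coe_finset, Finset.card_compl, hcard]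
  -- lower bound
  have hlow : ∀ m ∈ {m | ∃ W : Set (Σ i : Fin k, Fin (a i)),
      W.ncard = m ∧ IsResolving G W}, n - k + (s - 1) ≤ m := by
    rintro m ⟨W, hWm, hW⟩
    set N := ((Set.toFinite W).toFinset)ᶜ with hN
    have hNW : ∀ v, v ∈ N ↔ v ∉ W := by
      intro v; rw [hN, Finset.mem_compl, Set.Finite.mem_toFinset]
    have hWN : m + N.card = n := by
      rw [← hWm, Set.ncard_eq_toFinset_card W (Set.toFinite W), hN, ← hcard]
      exact Finset.card_add_card_compl _
    set f : Fin k → ℕ := fun i => (N.filter (fun v => v.1 = i)).card with hf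
    have fiber_le : ∀ i : Fin k, f i ≤ 1 := by
      intro i
      rw [hf, Finset.card_le_one]
      intro x hx y hy
      by_contra hne
      obtain ⟨z, hz, hd⟩ := hW x y hne
      have hzx : x ≠ z := fun h => ((hNW x).mp (Finset.mem_filter.mp hx).1) (h ▸ hz)
      have hzy : y ≠ z := fun h => ((hNW y).mp (Finset.mem_filter.mp hy).1) (h ▸ hz)
      have hxy1 : x.1 = y.1 := by
        rw [(Finset.mem_filter.mp hx).2, (Finset.mem_filter.mp hy).2]
      apply hd
      rw [hdist x z, hdist y z, if_neg hzx, if_neg hzy, hxy1]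
    have hsing : ∀ i j : Fin k, a i = 1 → a j = 1 →
        f i ≠ 0 → f j ≠ 0 → i = j := by
      intro i j hai haj hfi hfj
      obtain ⟨x, hx⟩ := Finset.card_pos.mp (Nat.pos_of_ne_zero hfi)
      obtain ⟨y, hy⟩ := Finset.card_pos.mp (Nat.pos_of_ne_zero hfj)
      by_contra hij
      have hx1 : x.1 = i := (Finset.mem_filter.mp hx).2
      have hy1 : y.1 = j := (Finset.mem_filter.mp hy).2
      have hxy : x ≠ y := fun h => hij (hx1 ▸ hy1 ▸ congrArg Sigma.fst h)
      obtain ⟨z, hz, hd⟩ := hW x y hxy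
      have hzx : x ≠ z := fun h => ((hNW x).mp (Finset.mem_filter.mp hx).1) (h ▸ hz)
      have hzy : y ≠ z := fun h => ((hNW y).mp (Finset.mem_filter.mp hy).1) (h ▸ hz)
      have hz1x : x.1 ≠ z.1 := by
        intro h
        exact hzx (cmp_part_eq h (hx1 ▸ hai))
      have hz1y : y.1 ≠ z.1 := by
        intro h
        exact hzy (cmp_part_eq h (hy1 ▸ haj))
      apply hd
      rw [hdist x z, hdist y z, if_neg hzx, if_neg hzy, if_neg hz1x, if_neg hz1y]
    set T := (Finset.univ.filter (fun i => a i = 1)) with hT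
    have hNsum : N.card = ∑ i : Fin k, f i :=
      Finset.card_eq_sum_card_fiberwise (fun v _ => Finset.mem_univ v.1)
    have hsplit : ∑ i ∈ T, f i + ∑ i ∈ Tᶜ, f i = ∑ i : Fin k, f i :=
      Finset.sum_add_sum_compl T f
    have hTle : ∑ i ∈ T, f i ≤ 1 := by
      by_cases hall : ∀ i ∈ T, f i = 0
      · rw [Finset.sum_eq_zero hall]; omega
      · push_neg at hall
        obtain ⟨i, hiT, hfi⟩ := hall
        have : ∑ j ∈ T, f j = f i := by
          apply Finset.sum_eq_single_of_mem i hiT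
          intro j hjT hji
          by_contra hfj
          exact hji (hsing j i (Finset.mem_filter.mp hjT).2 (Finset.mem_filter.mp hiT).2
            hfj hfi)
        rw [this]
        exact fiber_le i
      -- done
    have hT0 : s = 0 → ∑ i ∈ T, f i = 0 := by
      intro h0
      have hTempty : T = ∅ := Finset.card_eq_zero.mp (by omega)
      rw [hTempty]
      simp
    have hTc : ∑ i ∈ Tᶜ, f i ≤ k - s := by
      calc ∑ i ∈ Tᶜ, f i ≤ ∑ _i ∈ Tᶜ, 1 := Finset.sum_le_sum (fun i _ => fiber_le i)
        _ = Tᶜ.card := by simp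
        _ = k - s := by rw [Finset.card_compl, Fintype.card_fin]
    rcases Nat.eq_zero_or_pos s with h0 | h0
    · have := hT0 h0
      omega
    · omega
  -- combine
  rw [metricDim]
  have hub := Nat.sInf_le hmem
  have hlb := le_csInf ⟨_, hmem⟩ hlow
  rw [hMcard'] at hub
  split_ifs with h0
  · rw [if_pos h0] at hub
    omega
  · rw [if_neg h0] at hub
    omega
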